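/- In the proximal gradient setting with L > L_f and j(u_1) < ∞, the iterates satisfy Σ_{k=1}^∞ ‖u_{k+1} − u_k‖²_{L²(Ω)} ≤ (2/(L − L_f))·(f(u_1) + j(u_1) − inf_{u}(f(u) + j(u))) < ∞; in particular ‖u_{k+1} − u_k‖_{L²(Ω)} → 0 as k → ∞, and u_{k+1} − u_k → 0 pointwise almost everywhere on Ω. -/

import Mathlib

open MeasureTheory Filter

/-- The canonical map `ℝ ∪ {±∞} → [0, ∞]`, truncating negative values to `0`. -/
noncomputable def erealToENNReal (x : EReal) : ENNReal :=
  if x = ⊤ then ⊤ else ENNReal.ofReal x.toReal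

/-- The integral functional `j(w) := ∫ g(w(x)) dμ(x)` with values in `ℝ ∪ {±∞}`, defined as
the integral of the positive part of `g ∘ w` minus the integral of its negative part. -/
noncomputable def jfun {α : Type*} [MeasurableSpace α] (μ : Measure α)
    (g : ℝ → EReal) (w : α → ℝ) : EReal :=
  ((∫⁻ x, erealToENNReal (g (w x)) ∂μ : ENNReal) : EReal) -
    ((∫⁻ x, erealToENNReal (-(g (w x))) ∂μ : ENNReal) : EReal)

open scoped ENNReal NNReal

lemma descent_lemma {E : Type*} [NormedAddCommGroup E] [InnerProductSpace ℝ E]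
    (f : E → ℝ) (gradf : E → E)
    (hderiv : ∀ w, HasFDerivAt f ((innerSL ℝ) (gradf w)) w)
    (Lf : NNReal) (hlip : LipschitzWith Lf gradf) (x y : E) :
    f y ≤ f x + inner ℝ (gradf x) (y - x) + (Lf : ℝ) / 2 * ‖y - x‖ ^ 2 := by
  set d := y - x with hd
  set ψ : ℝ → ℝ := fun t => inner ℝ (gradf (x + t • d)) d with hψ
  have hφ : ∀ t : ℝ, HasDerivAt (fun t => f (x + t • d)) (ψ t) t := by
    intro t
    have h1 : HasDerivAt (fun t : ℝ => x + t • d) d t := by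
      simpa using ((hasDerivAt_id t).smul_const d).const_add x
    have := (hderiv (x + t • d)).comp_hasDerivAt t h1
    exact this
  have hψcont : Continuous ψ := by
    have hc : Continuous fun t : ℝ => gradf (x + t • d) :=
      hlip.continuous.comp (by continuity)
    exact hc.inner continuous_const
  have hFTC : ∫ t in (0:ℝ)..1, ψ t = f (x + (1:ℝ) • d) - f (x + (0:ℝ) • d) :=
    intervalIntegral.integral_eq_sub_of_hasDerivAt (fun t _ => hφ t)
      (hψcont.intervalIntegrable 0 1)
  have hbound : ∀ t ∈ Set.Icc (0:ℝ) 1, ψ t ≤ ψ 0 + (Lf : ℝ) * ‖d‖ ^ 2 * t := by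
    intro t ht
    have h1 : ψ t - ψ 0 = inner ℝ (gradf (x + t • d) - gradf (x + (0:ℝ) • d)) d := by
      simp [hψ, inner_sub_left]
    have h2 : ψ t - ψ 0 ≤ ‖gradf (x + t • d) - gradf (x + (0:ℝ) • d)‖ * ‖d‖ := by
      rw [h1]; exact real_inner_le_norm _ _
    have h3 : ‖gradf (x + t • d) - gradf (x + (0:ℝ) • d)‖ ≤ (Lf : ℝ) * (t * ‖d‖) := by
      have := hlip.dist_le_mul (x + t • d) (x + (0:ℝ) • d)
      rw [dist_eq_norm, dist_eq_norm] at this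
      calc ‖gradf (x + t • d) - gradf (x + (0:ℝ) • d)‖
          ≤ (Lf : ℝ) * ‖(x + t • d) - (x + (0:ℝ) • d)‖ := this
        _ = (Lf : ℝ) * (t * ‖d‖) := by
            rw [show (x + t • d) - (x + (0:ℝ) • d) = t • d by abel_nf; simp [smul_smul]
              ]
            rw [norm_smul]
            simp [abs_of_nonneg ht.1]
    nlinarith [norm_nonneg d, ht.1,
      real_inner_le_norm (gradf (x + t • d) - gradf (x + (0:ℝ) • d)) d]
  have hint : ∫ t in (0:ℝ)..1, ψ t ≤ ∫ t in (0:ℝ)..1, (ψ 0 + (Lf : ℝ) * ‖d‖ ^ 2 * t) := by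
    apply intervalIntegral.integral_mono_on (by norm_num) (hψcont.intervalIntegrable 0 1)
      ((continuous_const.add (continuous_const.mul continuous_id)).intervalIntegrable 0 1)
    exact hbound
  have hval : ∫ t in (0:ℝ)..1, (ψ 0 + (Lf : ℝ) * ‖d‖ ^ 2 * t) = ψ 0 + (Lf : ℝ) * ‖d‖ ^ 2 / 2 := by
    have : ∫ t in (0:ℝ)..1, (ψ 0 + (Lf : ℝ) * ‖d‖ ^ 2 * t) =
        (∫ _t in (0:ℝ)..1, ψ 0) + ∫ t in (0:ℝ)..1, (Lf : ℝ) * ‖d‖ ^ 2 * t :=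
      intervalIntegral.integral_add intervalIntegrable_const
        ((continuous_const.mul continuous_id).intervalIntegrable 0 1)
    rw [this, intervalIntegral.integral_const_mul, integral_id]
    norm_num
    ring
  have hψ0 : ψ 0 = inner ℝ (gradf x) d := by simp [hψ]
  have : f y - f x ≤ ψ 0 + (Lf : ℝ) * ‖d‖ ^ 2 / 2 := by
    have := hFTC
    simp only [one_smul, zero_smul, add_zero] at this
    rw [hd] at this
    simp only [add_sub_cancel] at this
    linarith [hint.trans_eq hval, this]
  rw [hψ0] at this
  linarith

lemma jfun_lb {α : Type*} [MeasurableSpace α] (μ : MeasureTheory.Measure α) (hμ : μ Set.univ ≠ ⊤)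
    (g : ℝ → EReal) (c : ℝ) (hg : ∀ x, (c : EReal) ≤ g x) (w : α → ℝ) :
    ((-((ENNReal.ofReal (max (-c) 0) * μ Set.univ).toReal) : ℝ) : EReal) ≤ jfun μ g w := by
  set C : ℝ≥0∞ := ENNReal.ofReal (max (-c) 0) with hC
  have hCtop : C * μ Set.univ ≠ ⊤ := ENNReal.mul_ne_top ENNReal.ofReal_ne_top hμ
  have hpt : ∀ z : EReal, (c : EReal) ≤ z → erealToENNReal (-z) ≤ C := by
    intro z hz
    induction z using EReal.rec with
    | bot => simp at hz
    | coe r =>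
        have hrc : c ≤ r := EReal.coe_le_coe_iff.1 hz
        rw [erealToENNReal, ← EReal.coe_neg, if_neg (EReal.coe_ne_top _)]
        rw [EReal.toReal_coe, hC]
        exact ENNReal.ofReal_le_ofReal (le_max_of_le_left (by linarith))
    | top =>
        rw [erealToENNReal]
        norm_num
  have hB : (∫⁻ x, erealToENNReal (-(g (w x))) ∂μ) ≤ C * μ Set.univ := by
    calc ∫⁻ x, erealToENNReal (-(g (w x))) ∂μ ≤ ∫⁻ _x, C ∂μ :=
          MeasureTheory.lintegral_mono fun x => hpt _ (hg _)
      _ = C * μ Set.univ := MeasureTheory.lintegral_const C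
  have hcoe : ((((C * μ Set.univ).toReal : ℝ)) : EReal) = ((C * μ Set.univ : ℝ≥0∞) : EReal) := by
    rw [← EReal.toReal_coe_ennreal]
    exact EReal.coe_toReal (fun h => hCtop (EReal.coe_ennreal_eq_top_iff.1 h))
      (EReal.coe_ennreal_ne_bot _)
  rw [jfun]
  calc ((-((C * μ Set.univ).toReal) : ℝ) : EReal)
      = -((C * μ Set.univ : ℝ≥0∞) : EReal) := by rw [EReal.coe_neg, hcoe]
    _ = 0 - ((C * μ Set.univ : ℝ≥0∞) : EReal) := by rw [zero_sub]
    _ ≤ _ :=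
        EReal.sub_le_sub (by exact_mod_cast (zero_le : (0:ℝ≥0∞) ≤ _))
          (EReal.coe_ennreal_le_coe_ennreal_iff.2 hB)

lemma tendsto_of_sq (b : ℕ → ℝ) (hb : ∀ k, 0 ≤ b k)
    (h : Filter.Tendsto (fun k => b k ^ 2) Filter.atTop (nhds 0)) :
    Filter.Tendsto b Filter.atTop (nhds 0) := by
  have h2 := (Real.continuous_sqrt.tendsto 0).comp h
  simp only [Function.comp_def, Real.sqrt_zero] at h2
  have heq : b = fun k => Real.sqrt (b k ^ 2) := funext fun k => (Real.sqrt_sq (hb k)).symm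
  rw [heq]; exact h2

set_option maxHeartbeats 2000000 in
/-- in the proximal gradient setting with `L > L_f` and `j(u_1) < ∞`, the sum
`Σ_{k=1}^∞ ‖u_{k+1} − u_k‖²` is finite and bounded by
`(2/(L − L_f))·(f(u_1) + j(u_1) − inf_u (f(u) + j(u))) < ∞`; in particular
`‖u_{k+1} − u_k‖ → 0` and `u_{k+1} − u_k → 0` pointwise almost everywhere on `Ω`. -/
theorem prox_grad_square_summable (n : ℕ) (Ω : Set (EuclideanSpace ℝ (Fin n)))
    (hΩ : MeasurableSet Ω) (hfin : volume Ω < ⊤)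
    (g : ℝ → EReal)
    (hgproper : ∃ x : ℝ, g x ≠ ⊤)
    (hgbdd : ∃ c : ℝ, ∀ x : ℝ, (c : EReal) ≤ g x)
    (hglsc : LowerSemicontinuous g)
    (f : Lp ℝ 2 (volume.restrict Ω) → ℝ)
    (hfbdd : ∃ m : ℝ, ∀ w, m ≤ f w)
    (gradf : Lp ℝ 2 (volume.restrict Ω) → Lp ℝ 2 (volume.restrict Ω))
    (hderiv : ∀ w, HasFDerivAt f ((innerSL ℝ) (gradf w)) w)
    (Lf : NNReal) (hlip : LipschitzWith Lf gradf)
    (L : ℝ) (hL : (Lf : ℝ) < L)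
    (u : ℕ → Lp ℝ 2 (volume.restrict Ω))
    (hiter : ∀ k : ℕ, ∀ w : Lp ℝ 2 (volume.restrict Ω),
      ((f (u k) + inner ℝ (gradf (u k)) (u (k+1) - u k) + L / 2 * ‖u (k+1) - u k‖ ^ 2 : ℝ) : EReal)
          + jfun (volume.restrict Ω) g (u (k+1)) ≤
        ((f (u k) + inner ℝ (gradf (u k)) (w - u k) + L / 2 * ‖w - u k‖ ^ 2 : ℝ) : EReal)
          + jfun (volume.restrict Ω) g w)
    (hj1 : jfun (volume.restrict Ω) g (u 1) ≠ ⊤) :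
    (Summable fun k : ℕ => ‖u (k + 2) - u (k + 1)‖ ^ 2)
    ∧ (((∑' k : ℕ, ‖u (k + 2) - u (k + 1)‖ ^ 2 : ℝ) : EReal) ≤
        ((2 / (L - Lf) : ℝ) : EReal) *
          ((((f (u 1) : ℝ) : EReal) + jfun (volume.restrict Ω) g (u 1)) -
            ⨅ w : Lp ℝ 2 (volume.restrict Ω), (((f w : ℝ) : EReal) + jfun (volume.restrict Ω) g w)))
    ∧ (((2 / (L - Lf) : ℝ) : EReal) *
          ((((f (u 1) : ℝ) : EReal) + jfun (volume.restrict Ω) g (u 1)) -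
            ⨅ w : Lp ℝ 2 (volume.restrict Ω), (((f w : ℝ) : EReal) + jfun (volume.restrict Ω) g w))
        < ⊤)
    ∧ Tendsto (fun k : ℕ => ‖u (k + 1) - u k‖) atTop (nhds 0)
    ∧ (∀ᵐ x ∂(volume.restrict Ω),
        Tendsto (fun k : ℕ => (u (k + 1) : EuclideanSpace ℝ (Fin n) → ℝ) x -
          (u k : EuclideanSpace ℝ (Fin n) → ℝ) x) atTop (nhds 0)) := by
  obtain ⟨c, hc⟩ := hgbdd
  obtain ⟨m, hm⟩ := hfbdd
  have hμuniv : (volume.restrict Ω) Set.univ ≠ ⊤ := by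
    rw [Measure.restrict_apply_univ]; exact hfin.ne
  set jlow : ℝ := -((ENNReal.ofReal (max (-c) 0) * (volume.restrict Ω) Set.univ).toReal) with hjlowdef
  have hjlb : ∀ w : Lp ℝ 2 (volume.restrict Ω), (jlow : EReal) ≤ jfun (volume.restrict Ω) g w := fun w =>
    jfun_lb (volume.restrict Ω) hμuniv g c hc w
  have hjbot : ∀ w : Lp ℝ 2 (volume.restrict Ω), jfun (volume.restrict Ω) g w ≠ ⊥ := by
    intro w h
    have h2 := hjlb w
    rw [h, le_bot_iff] at h2
    exact EReal.coe_ne_bot jlow h2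
  have hstep : ∀ k : ℕ, jfun (volume.restrict Ω) g (u k) ≠ ⊤ →
      jfun (volume.restrict Ω) g (u (k+1)) ≠ ⊤ ∧
      f (u (k+1)) + (jfun (volume.restrict Ω) g (u (k+1))).toReal + (L - Lf)/2 * ‖u (k+1) - u k‖^2
        ≤ f (u k) + (jfun (volume.restrict Ω) g (u k)).toReal := by
    intro k hk
    have h := hiter k (u k)
    have hsimp : (f (u k) + inner ℝ (gradf (u k)) ((u k) - u k) + L / 2 * ‖(u k) - u k‖ ^ 2 : ℝ)
        = f (u k) := by simp
    rw [hsimp] at h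
    have hk1 : jfun (volume.restrict Ω) g (u (k+1)) ≠ ⊤ := by
      intro htop
      rw [htop, EReal.add_top_of_ne_bot (EReal.coe_ne_bot _)] at h
      rw [← EReal.coe_toReal hk (hjbot (u k)), ← EReal.coe_add, top_le_iff] at h
      exact EReal.coe_ne_top _ h
    refine ⟨hk1, ?_⟩
    rw [← EReal.coe_toReal hk (hjbot (u k)), ← EReal.coe_toReal hk1 (hjbot (u (k+1))),
      ← EReal.coe_add, ← EReal.coe_add, EReal.coe_le_coe_iff] at h
    have hdes := descent_lemma f gradf hderiv Lf hlip (u k) (u (k+1))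
    linarith
  have hJ : ∀ k : ℕ, 1 ≤ k → jfun (volume.restrict Ω) g (u k) ≠ ⊤ := by
    intro k hk
    induction k, hk using Nat.le_induction with
    | base => exact hj1
    | succ k hk ih => exact (hstep k ih).1
  set S : ℕ → ℝ := fun k => f (u k) + (jfun (volume.restrict Ω) g (u k)).toReal with hSdef
  have key : ∀ k, 1 ≤ k → S (k+1) + (L - Lf)/2 * ‖u (k+1) - u k‖^2 ≤ S k :=
    fun k hk => (hstep k (hJ k hk)).2
  have htel : ∀ N : ℕ,
      (L - Lf)/2 * (∑ i ∈ Finset.range N, ‖u (i+2) - u (i+1)‖^2) ≤ S 1 - S (N+1) := by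
    intro N
    induction N with
    | zero => simp
    | succ N ih =>
        rw [Finset.sum_range_succ, mul_add]
        have h2 : S (N+2) + (L - Lf)/2 * ‖u (N+2) - u (N+1)‖^2 ≤ S (N+1) :=
          key (N+1) (by omega)
        linarith
  set I : EReal := ⨅ w : Lp ℝ 2 (volume.restrict Ω), (((f w : ℝ) : EReal) + jfun (volume.restrict Ω) g w) with hIdef
  have hIlb : ((m + jlow : ℝ) : EReal) ≤ I := by
    refine le_iInf fun w => ?_
    rw [EReal.coe_add]
    exact add_le_add (EReal.coe_le_coe_iff.2 (hm w)) (hjlb w)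
  have hFu : ∀ k, 1 ≤ k → (((f (u k) : ℝ) : EReal) + jfun (volume.restrict Ω) g (u k)) = ((S k : ℝ) : EReal) := by
    intro k hk
    rw [hSdef]
    rw [← EReal.coe_toReal (hJ k hk) (hjbot (u k)), ← EReal.coe_add]
  have hIub : I ≤ ((S 1 : ℝ) : EReal) := by
    rw [← hFu 1 le_rfl]; exact iInf_le _ (u 1)
  have hIbot : I ≠ ⊥ := by
    intro h; rw [h, le_bot_iff] at hIlb; exact EReal.coe_ne_bot _ hIlb
  have hItop : I ≠ ⊤ := by
    intro h; rw [h, top_le_iff] at hIub; exact EReal.coe_ne_top _ hIub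
  obtain ⟨Ir, hIcoe⟩ : ∃ r : ℝ, (r : EReal) = I := ⟨I.toReal, EReal.coe_toReal hItop hIbot⟩
  have hIrS : ∀ k, 1 ≤ k → Ir ≤ S k := by
    intro k hk
    have h2 : I ≤ ((S k : ℝ) : EReal) := by rw [← hFu k hk]; exact iInf_le _ (u k)
    rw [← hIcoe, EReal.coe_le_coe_iff] at h2
    exact h2
  clear_value jlow S I
  have hLpos : (0:ℝ) < L - Lf := by linarith
  have hbd : ∀ N, ∑ i ∈ Finset.range N, ‖u (i+2) - u (i+1)‖^2 ≤ 2/(L - Lf) * (S 1 - Ir) := by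
    intro N
    have h1 := htel N
    have h2 := hIrS (N+1) (by omega)
    have h3 : (L - Lf)/2 * (∑ i ∈ Finset.range N, ‖u (i+2) - u (i+1)‖^2) ≤ S 1 - Ir := by
      linarith
    have hs : (∑ i ∈ Finset.range N, ‖u (i+2) - u (i+1)‖^2) ≤ (S 1 - Ir) / ((L - Lf)/2) := by
      rw [le_div_iff₀ (by linarith : (0:ℝ) < (L - Lf)/2)]
      linarith
    have heq : (S 1 - Ir) / ((L - Lf)/2) = 2/(L - Lf) * (S 1 - Ir) := by
      field_simp
    rw [heq] at hs
    exact hs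
  have hnn : ∀ k : ℕ, 0 ≤ ‖u (k+2) - u (k+1)‖^2 := fun k => sq_nonneg _
  have hsummable : Summable (fun k : ℕ => ‖u (k+2) - u (k+1)‖^2) :=
    summable_of_sum_range_le hnn hbd
  have htsum : ∑' k : ℕ, ‖u (k+2) - u (k+1)‖^2 ≤ 2/(L - Lf) * (S 1 - Ir) :=
    Real.tsum_le_of_sum_range_le hnn hbd
  refine ⟨hsummable, ?_, ?_, ?_, ?_⟩
  · rw [hFu 1 le_rfl, ← hIcoe, ← EReal.coe_sub, ← EReal.coe_mul, EReal.coe_le_coe_iff]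
    exact htsum
  · rw [hFu 1 le_rfl, ← hIcoe, ← EReal.coe_sub, ← EReal.coe_mul]
    exact EReal.coe_lt_top _
  · have h4 : Tendsto (fun k : ℕ => ‖u (k+2) - u (k+1)‖^2) atTop (nhds 0) :=
      hsummable.tendsto_atTop_zero
    have h5 : Tendsto (fun k : ℕ => ‖u (k+2) - u (k+1)‖) atTop (nhds 0) :=
      tendsto_of_sq _ (fun _ => norm_nonneg _) h4
    exact (tendsto_add_atTop_iff_nat (f := fun k : ℕ => ‖u (k+1) - u k‖) 1).1 h5
  · -- pointwise a.e. convergence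
    have hInt : ∀ v : Lp ℝ 2 (volume.restrict Ω),
        (∫⁻ x, ((‖v x‖₊ : ℝ≥0∞)) ^ (2:ℕ) ∂(volume.restrict Ω)) = ENNReal.ofReal (‖v‖^2) := by
      intro v
      have h2 : eLpNorm v 2 (volume.restrict Ω) = (∫⁻ x, ((‖v x‖₊ : ℝ≥0∞)) ^ (2:ℝ) ∂(volume.restrict Ω)) ^ (1/(2:ℝ)) := by
        rw [eLpNorm_eq_lintegral_rpow_enorm_toReal (by norm_num) (by norm_num)]
        norm_num
        rfl
      have hne : eLpNorm v 2 (volume.restrict Ω) ≠ ⊤ := Lp.eLpNorm_ne_top v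
      have h3 : (eLpNorm v 2 (volume.restrict Ω)) ^ (2:ℝ) = ∫⁻ x, ((‖v x‖₊ : ℝ≥0∞)) ^ (2:ℝ) ∂(volume.restrict Ω) := by
        rw [h2, ← ENNReal.rpow_mul]
        norm_num
      have h4 : eLpNorm v 2 (volume.restrict Ω) = ENNReal.ofReal ‖v‖ := by
        rw [Lp.norm_def, ENNReal.ofReal_toReal hne]
      have h5 : ∫⁻ x, ((‖v x‖₊ : ℝ≥0∞)) ^ (2:ℕ) ∂(volume.restrict Ω) = ∫⁻ x, ((‖v x‖₊ : ℝ≥0∞)) ^ (2:ℝ) ∂(volume.restrict Ω) := by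
        congr 1
        funext x
        rw [← ENNReal.rpow_natCast]
        norm_num
      rw [h5, ← h3, h4,
        ENNReal.ofReal_rpow_of_nonneg (norm_nonneg v) (by norm_num : (0:ℝ) ≤ 2)]
      congr 1
      rw [← Real.rpow_natCast ‖v‖ 2]
      norm_num
    have hmeasD : ∀ k : ℕ, AEMeasurable
        (fun x => ((‖(u (k+2) - u (k+1) : Lp ℝ 2 (volume.restrict Ω)) x‖₊ : ℝ≥0∞)) ^ (2:ℕ)) (volume.restrict Ω) := by
      intro k
      exact ((Lp.aestronglyMeasurable
        (u (k+2) - u (k+1))).aemeasurable.nnnorm.coe_nnreal_ennreal).pow_const 2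
    have hsum1 : (∑' k : ℕ, ∫⁻ x, ((‖(u (k+2) - u (k+1) : Lp ℝ 2 (volume.restrict Ω)) x‖₊ : ℝ≥0∞)) ^ (2:ℕ) ∂(volume.restrict Ω))
        ≠ ⊤ := by
      have he : ∀ k : ℕ, ∫⁻ x, ((‖(u (k+2) - u (k+1) : Lp ℝ 2 (volume.restrict Ω)) x‖₊ : ℝ≥0∞)) ^ (2:ℕ) ∂(volume.restrict Ω)
          = ENNReal.ofReal (‖u (k+2) - u (k+1)‖^2) := fun k => hInt _
      rw [tsum_congr he, ← ENNReal.ofReal_tsum_of_nonneg hnn hsummable]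
      exact ENNReal.ofReal_ne_top
    have hlint : ∫⁻ x, (∑' k : ℕ,
        ((‖(u (k+2) - u (k+1) : Lp ℝ 2 (volume.restrict Ω)) x‖₊ : ℝ≥0∞)) ^ (2:ℕ)) ∂(volume.restrict Ω) ≠ ⊤ := by
      rw [lintegral_tsum hmeasD]; exact hsum1
    have hae1 : ∀ᵐ x ∂(volume.restrict Ω), (∑' k : ℕ,
        ((‖(u (k+2) - u (k+1) : Lp ℝ 2 (volume.restrict Ω)) x‖₊ : ℝ≥0∞)) ^ (2:ℕ)) < ⊤ :=
      ae_lt_top' (AEMeasurable.ennreal_tsum hmeasD) hlint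
    have hae2 : ∀ᵐ x ∂(volume.restrict Ω), ∀ k : ℕ,
        (u (k+2) - u (k+1) : Lp ℝ 2 (volume.restrict Ω)) x = u (k+2) x - u (k+1) x :=
      ae_all_iff.2 fun k => Lp.coeFn_sub _ _
    filter_upwards [hae1, hae2] with x hx1 hx2
    have hsx : Summable (fun k : ℕ =>
        (((‖(u (k+2) - u (k+1) : Lp ℝ 2 (volume.restrict Ω)) x‖₊ : ℝ≥0∞)) ^ (2:ℕ)).toReal) :=
      ENNReal.summable_toReal hx1.ne
    have hsx2 : Summable (fun k : ℕ => ‖u (k+2) x - u (k+1) x‖ ^ 2) := by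
      refine hsx.congr fun k => ?_
      rw [ENNReal.toReal_pow, ENNReal.coe_toReal, coe_nnnorm, hx2 k]
    have h6 : Tendsto (fun k : ℕ => ‖u (k+2) x - u (k+1) x‖) atTop (nhds 0) :=
      tendsto_of_sq _ (fun _ => norm_nonneg _) hsx2.tendsto_atTop_zero
    have h7 : Tendsto (fun k : ℕ => u (k+2) x - u (k+1) x) atTop (nhds 0) := by
      rw [tendsto_zero_iff_norm_tendsto_zero]
      exact h6
    exact (tendsto_add_atTop_iff_nat
      (f := fun k : ℕ => u (k+1) x - u k x) 1).1 h7
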